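/- Let n ≥ 1 and let Γ : (Fin n → ℝ≥0) → (Fin n → ℝ≥0) be continuous, monotone, subadditive and homogeneous of degree one. Then ‖Γ^m(𝟙)‖ < 1 for some m ∈ ℕ (equivalently, the spectral radius r(Γ) < 1) if and only if there exist functions σ_1,…,σ_n of class K∞ and ρ of class K∞ such that Γ(σ(r)) ≤ (id + ρ)⁻¹(σ(r)) componentwise for all r ≥ 0, where σ(r) := (σ_1(r),…,σ_n(r)); i.e., if and only if there exists a path of strict decay with respect to Γ. -/

import Mathlib

open scoped NNReal

/-- A function `ℝ≥0 → ℝ≥0` of class `K∞`: continuous, strictly increasing, vanishing at `0`,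
and tending to `∞`. -/
def IsKInf (f : ℝ≥0 → ℝ≥0) : Prop :=
  Continuous f ∧ StrictMono f ∧ f 0 = 0 ∧ Filter.Tendsto f Filter.atTop Filter.atTop

/-- Finite-dimensional case: for a continuous, monotone, subadditive,
homogeneous-of-degree-one operator `Γ` on `Fin n → ℝ≥0`, the spectral radius condition
(`‖Γ^m(𝟙)‖ < 1` for some `m`) holds if and only if there exists a path of strict decay
with respect to `Γ`: functions `σ_1, …, σ_n` of class `K∞` and `ρ` of class `K∞` with
`Γ(σ(r)) ≤ (id + ρ)⁻¹ (σ(r))` componentwise for all `r ≥ 0`. -/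
theorem finite_dim_spectral_radius_iff_path_of_strict_decay
    (n : ℕ) (hn : 1 ≤ n)
    (Γ : (Fin n → ℝ≥0) → Fin n → ℝ≥0)
    (hcont : Continuous Γ)
    (hmono : ∀ r s : Fin n → ℝ≥0, (∀ i, r i ≤ s i) → ∀ i, Γ r i ≤ Γ s i)
    (hsub : ∀ (r s : Fin n → ℝ≥0) (i : Fin n), Γ (fun k => r k + s k) i ≤ Γ r i + Γ s i)
    (hhom : ∀ (c : ℝ≥0) (s : Fin n → ℝ≥0) (i : Fin n), Γ (fun k => c * s k) i = c * Γ s i) :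
    (∃ m : ℕ, (⨆ i, Γ^[m] (fun _ => 1) i) < 1) ↔
      ∃ σ : Fin n → ℝ≥0 → ℝ≥0, ∃ ρ : ℝ≥0 → ℝ≥0,
        (∀ i, IsKInf (σ i)) ∧ IsKInf ρ ∧
        ∀ (r : ℝ≥0) (i : Fin n),
          Γ (fun k => σ k r) i ≤ Function.invFun (fun t : ℝ≥0 => t + ρ t) (σ i r) := by
  haveI : Nonempty (Fin n) := ⟨⟨0, hn⟩⟩
  constructor
  · rintro ⟨m, hm⟩
    -- m ≠ 0
    have hm0 : m ≠ 0 := by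
      rintro rfl
      simp only [Function.iterate_zero, id_eq, ciSup_const] at hm
      exact absurd hm (lt_irrefl _)
    set θ' : ℝ≥0 := max (⨆ i, Γ^[m] (fun _ => 1) i) (1/2) with hθ'def
    have hhalf : (1/2 : ℝ≥0) < 1 := by
      rw [← NNReal.coe_lt_coe]; norm_num
    have hhalf0 : (0 : ℝ≥0) < 1/2 := by
      rw [← NNReal.coe_lt_coe]; norm_num
    have hθ'1 : θ' < 1 := max_lt hm hhalf
    have hθ'0 : 0 < θ' := lt_of_lt_of_le hhalf0 (le_max_right _ _)
    set μ : ℝ≥0 := θ' ^ ((m : ℝ)⁻¹) with hμdef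
    have hμm : μ ^ m = θ' := by
      have hmne : (m : ℝ) ≠ 0 := Nat.cast_ne_zero.2 hm0
      rw [hμdef, ← NNReal.rpow_natCast (θ' ^ ((m : ℝ)⁻¹)) m, ← NNReal.rpow_mul,
        inv_mul_cancel₀ hmne, NNReal.rpow_one]
    have hμ1 : μ < 1 := NNReal.rpow_lt_one hθ'1 (by positivity)
    have hμ0 : 0 < μ := NNReal.rpow_pos hθ'0
    -- the vector v
    set v : Fin n → ℝ≥0 :=
      fun i => ∑ k ∈ Finset.range m, μ⁻¹ ^ k * Γ^[k] (fun _ => 1) i with hvdef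
    have hv1 : ∀ i, 1 ≤ v i := by
      intro i
      have h0 : (0 : ℕ) ∈ Finset.range m := Finset.mem_range.2 (Nat.pos_of_ne_zero hm0)
      have h := Finset.single_le_sum (f := fun k => μ⁻¹ ^ k * Γ^[k] (fun _ => 1) i)
        (fun k _ => zero_le) h0
      simpa [hvdef, inv_pow] using h
    have hΓ0 : ∀ i, Γ (fun _ => 0) i = 0 := by
      intro i
      have := hhom 0 (fun _ => 0) i
      simpa using this
    -- finite subadditivity
    have hsum : ∀ (s : Finset ℕ) (f : ℕ → Fin n → ℝ≥0) (i : Fin n),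
        Γ (fun j => ∑ k ∈ s, f k j) i ≤ ∑ k ∈ s, Γ (f k) i := by
      intro s f i
      induction s using Finset.induction_on with
      | empty => simp [hΓ0 i]
      | insert a s' ha ih =>
        have h1 : (fun j => ∑ k ∈ insert a s', f k j)
            = fun j => f a j + ∑ k ∈ s', f k j := by
          funext j; rw [Finset.sum_insert ha]
        rw [h1, Finset.sum_insert ha]
        exact le_trans (hsub (f a) (fun j => ∑ k ∈ s', f k j) i) (add_le_add_right ih _)
    -- bound on Γ^[m] 𝟙
    have hΓm : ∀ i, Γ^[m] (fun _ => 1) i ≤ θ' := by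
      intro i
      refine le_trans ?_ (le_max_left _ _)
      exact le_ciSup (Set.Finite.bddAbove (Set.finite_range _)) i
    -- key inequality
    have hΓv : ∀ i, Γ v i ≤ μ * v i := by
      intro i
      have step1 : Γ v i ≤ ∑ k ∈ Finset.range m, μ⁻¹ ^ k * Γ^[k + 1] (fun _ => 1) i := by
        refine le_trans (hsum (Finset.range m)
          (fun k => fun j => μ⁻¹ ^ k * Γ^[k] (fun _ => 1) j) i) ?_
        refine Finset.sum_le_sum fun k _ => ?_
        rw [hhom (μ⁻¹ ^ k) (Γ^[k] (fun _ => 1)) i, Function.iterate_succ_apply']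
      refine le_trans step1 ?_
      have hmul : μ * v i = ∑ k ∈ Finset.range m, μ * (μ⁻¹ ^ k * Γ^[k] (fun _ => 1) i) := by
        rw [hvdef, Finset.mul_sum]
      rw [hmul]
      obtain ⟨m', rfl⟩ : ∃ m', m = m' + 1 := ⟨m - 1, (Nat.succ_pred_eq_of_pos (Nat.pos_of_ne_zero hm0)).symm⟩
      rw [Finset.sum_range_succ, Finset.sum_range_succ']
      refine add_le_add (le_of_eq (Finset.sum_congr rfl fun k _ => ?_)) ?_
      · rw [pow_succ]
        field_simp
      · -- μ⁻¹ ^ m' * Γ^[m' + 1] 𝟙 i ≤ μ * (μ⁻¹ ^ 0 * Γ^[0] 𝟙 i)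
        simp only [pow_zero, one_mul, Function.iterate_zero, id_eq]
        have h1 : Γ^[m' + 1] (fun _ => 1) i ≤ μ ^ (m' + 1) := by
          rw [hμm]; exact hΓm i
        calc μ⁻¹ ^ m' * Γ^[m' + 1] (fun _ => 1) i
            ≤ μ⁻¹ ^ m' * μ ^ (m' + 1) := by gcongr
          _ = μ * 1 := by
              rw [pow_succ, ← mul_assoc, ← mul_pow, inv_mul_cancel₀ hμ0.ne', one_pow, one_mul,
                mul_one]
    -- build σ and ρ
    set c : ℝ≥0 := μ⁻¹ - 1 with hcdef
    have hcμ : 1 + c = μ⁻¹ := add_tsub_cancel_of_le (one_lt_inv_iff₀.2 ⟨hμ0, hμ1⟩).le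
    have hf : ∀ t : ℝ≥0, t + c * t = μ⁻¹ * t := by
      intro t
      calc t + c * t = (1 + c) * t := by ring
        _ = μ⁻¹ * t := by rw [hcμ]
    have hinv : ∀ y : ℝ≥0, Function.invFun (fun t : ℝ≥0 => t + c * t) y = μ * y := by
      intro y
      have hinj : Function.Injective (fun t : ℝ≥0 => t + c * t) := by
        intro a b hab
        simp only [hf] at hab
        exact mul_left_cancel₀ (inv_ne_zero hμ0.ne') hab
      have hfy : (fun t : ℝ≥0 => t + c * t) (μ * y) = y := by
        show μ * y + c * (μ * y) = y
        rw [hf, ← mul_assoc, inv_mul_cancel₀ hμ0.ne', one_mul]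
      have := Function.invFun_eq (f := fun t : ℝ≥0 => t + c * t) ⟨μ * y, hfy⟩
      exact hinj (this.trans hfy.symm)
    refine ⟨fun i t => v i * t, fun t => c * t, ?_, ?_, ?_⟩
    · intro i
      have hvi : 0 < v i := lt_of_lt_of_le one_pos (hv1 i)
      refine ⟨continuous_const.mul continuous_id, fun a b hab => ?_, by simp, ?_⟩
      · exact mul_lt_mul_of_pos_left hab hvi
      · exact Filter.Tendsto.const_mul_atTop hvi Filter.tendsto_id
    · have hc0 : 0 < c := by
        have : (1 : ℝ≥0) < μ⁻¹ := one_lt_inv_iff₀.2 ⟨hμ0, hμ1⟩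
        exact tsub_pos_of_lt this
      refine ⟨continuous_const.mul continuous_id, fun a b hab => ?_, by simp, ?_⟩
      · exact mul_lt_mul_of_pos_left hab hc0
      · exact Filter.Tendsto.const_mul_atTop hc0 Filter.tendsto_id
    · intro r i
      have heq : (fun k => v k * r) = fun k => r * v k := by funext k; ring
      rw [hinv, heq, hhom r v i]
      calc r * Γ v i ≤ r * (μ * v i) := by have := hΓv i; gcongr
        _ = μ * (v i * r) := by ring
  · rintro ⟨σ, ρ, hσ, hρ, hdec⟩
    obtain ⟨hρc, hρm, hρ0, hρt⟩ := hρ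
    set f : ℝ≥0 → ℝ≥0 := fun t => t + ρ t with hfdef
    have hfc : Continuous f := continuous_id.add hρc
    have hf0 : f 0 = 0 := by simp [hfdef, hρ0]
    have hftop : Filter.Tendsto f Filter.atTop Filter.atTop :=
      Filter.tendsto_atTop_mono (fun t => le_self_add) Filter.tendsto_id
    have hfsurj : ∀ y : ℝ≥0, ∃ x, f x = y := by
      intro y
      obtain ⟨b, hb⟩ := (hftop.eventually_ge_atTop y).exists
      have h := intermediate_value_Icc (by positivity : (0:ℝ≥0) ≤ b) hfc.continuousOn
      have hy : y ∈ Set.Icc (f 0) (f b) := ⟨by rw [hf0]; positivity, hb⟩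
      obtain ⟨x, _, hx⟩ := h hy
      exact ⟨x, hx⟩
    set g : ℝ≥0 → ℝ≥0 := Function.invFun f with hgdef
    have hg : ∀ y, f (g y) = y := fun y => Function.invFun_eq (hfsurj y)
    have hglt : ∀ y : ℝ≥0, y ≠ 0 → g y < y := by
      intro y hy
      have h1 : g y + ρ (g y) = y := hg y
      have hgy0 : g y ≠ 0 := by
        rintro h
        rw [h] at h1
        simp [hρ0] at h1
        exact hy h1.symm
      have hρpos : 0 < ρ (g y) := by
        have := hρm (zero_lt_iff.2 hgy0)
        rwa [hρ0] at this
      calc g y < g y + ρ (g y) := lt_add_of_pos_right _ hρpos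
        _ = y := h1
    -- choose r₀ with σ i r₀ ≥ 1 for all i
    have hev : ∀ᶠ t in Filter.atTop, ∀ i, 1 ≤ σ i t :=
      Filter.eventually_all.2 fun i => (hσ i).2.2.2.eventually_ge_atTop 1
    obtain ⟨r₀, hr₀⟩ := hev.exists
    set v : Fin n → ℝ≥0 := fun i => σ i r₀ with hvdef
    have hv1 : ∀ i, 1 ≤ v i := hr₀
    have hv0 : ∀ i, v i ≠ 0 := fun i => (lt_of_lt_of_le one_pos (hv1 i)).ne'
    have hΓv : ∀ i, Γ v i < v i := fun i =>
      lt_of_le_of_lt (hdec r₀ i) (hglt _ (hv0 i))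
    -- contraction factor
    set θ : ℝ≥0 := Finset.univ.sup' Finset.univ_nonempty (fun i => Γ v i / v i) with hθdef
    have hθ1 : θ < 1 := by
      rw [hθdef, Finset.sup'_lt_iff]
      intro i _
      exact (div_lt_one (zero_lt_iff.2 (hv0 i))).2 (hΓv i)
    have hθv : ∀ i, Γ v i ≤ θ * v i := by
      intro i
      have h1 : Γ v i = (Γ v i / v i) * v i := (div_mul_cancel₀ _ (hv0 i)).symm
      rw [h1, hθdef]
      have := Finset.le_sup' (fun i => Γ v i / v i) (Finset.mem_univ i); gcongr
    -- iterates
    have hiter : ∀ m i, Γ^[m] v i ≤ θ ^ m * v i := by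
      intro m
      induction m with
      | zero => intro i; simp
      | succ m ih =>
        intro i
        rw [Function.iterate_succ_apply']
        calc Γ (Γ^[m] v) i ≤ Γ (fun j => θ ^ m * v j) i := hmono _ _ ih i
          _ = θ ^ m * Γ v i := hhom _ _ i
          _ ≤ θ ^ m * (θ * v i) := by have := hθv i; gcongr
          _ = θ ^ (m + 1) * v i := by ring
    have hone : ∀ m i, Γ^[m] (fun _ => 1) i ≤ Γ^[m] v i := by
      intro m
      induction m with
      | zero => intro i; exact hv1 i
      | succ m ih =>
        intro i
        rw [Function.iterate_succ_apply', Function.iterate_succ_apply']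
        exact hmono _ _ ih i
    set M : ℝ≥0 := Finset.univ.sup' Finset.univ_nonempty v with hMdef
    have hM1 : 1 ≤ M := le_trans (hv1 (Classical.arbitrary _))
      (Finset.le_sup' v (Finset.mem_univ _))
    have hM0 : 0 < M := lt_of_lt_of_le one_pos hM1
    obtain ⟨m, hmlt⟩ : ∃ m, θ ^ m < M⁻¹ := by
      have h := NNReal.tendsto_pow_atTop_nhds_zero_of_lt_one hθ1
      exact (h.eventually_lt_const (by positivity)).exists
    refine ⟨m, lt_of_le_of_lt (b := θ ^ m * M) (ciSup_le fun i => ?_) ?_⟩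
    · calc Γ^[m] (fun _ => 1) i ≤ Γ^[m] v i := hone m i
        _ ≤ θ ^ m * v i := hiter m i
        _ ≤ θ ^ m * M := by have := Finset.le_sup' v (Finset.mem_univ i); gcongr
    · calc θ ^ m * M < M⁻¹ * M := mul_lt_mul_of_pos_right hmlt hM0
        _ = 1 := inv_mul_cancel₀ hM0.ne'
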